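/- Let H : ℝ^d × ℝ^d → ℝ be concave in λ, satisfy |H(x,λ₁)−H(x,λ₂)| ≤ C₁|λ₁−λ₂| and |H(x₁,λ)−H(x₂,λ)| ≤ C₂|x₁−x₂|(1+|λ|), and define L(x,α) = sup_λ(−α·λ + H(x,λ)). Then for any x₁, x₂, α₁ ∈ ℝ^d and any β > 0 there exists α₂ ∈ ℝ^d with |α₂ − α₁| ≤ C₂|x₂ − x₁| + β and L(x₂, α₂) ≤ L(x₁, α₁) + C₂|x₂ − x₁|. -/

import Mathlib

open InnerProductSpace

/-- Sandwich lemma: a concave function dominated by `M + ⟪α₁,·⟫ + r‖·‖` admits an affine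
majorant `M + ⟪α₂,·⟫` with `‖α₂ - α₁‖ ≤ r`.  Proved by Hahn–Banach separation between the
hypograph of `h` and the open strict epigraph of the convex majorant. -/
lemma sandwich_aux {E : Type*} [NormedAddCommGroup E] [InnerProductSpace ℝ E] [CompleteSpace E]
    (h : E → ℝ) (hconc : ConcaveOn ℝ Set.univ h) (α₁ : E) (M r : ℝ) (hr : 0 ≤ r)
    (hb : ∀ l, h l ≤ M + ⟪α₁, l⟫_ℝ + r * ‖l‖) :
    ∃ α₂ : E, ‖α₂ - α₁‖ ≤ r ∧ ∀ l, h l ≤ M + ⟪α₂, l⟫_ℝ := by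
  obtain ⟨f, u, hfA, hfB⟩ :
      ∃ (f : (E × ℝ) →L[ℝ] ℝ) (u : ℝ),
        (∀ p : E × ℝ, M + ⟪α₁, p.1⟫_ℝ + r * ‖p.1‖ < p.2 → f p < u) ∧
        (∀ p : E × ℝ, p.2 ≤ h p.1 → u ≤ f p) := by
    have hAopen : IsOpen {p : E × ℝ | M + ⟪α₁, p.1⟫_ℝ + r * ‖p.1‖ < p.2} := by
      apply isOpen_lt _ continuous_snd
      exact (continuous_const.add (Continuous.inner continuous_const continuous_fst)).add
        (continuous_const.mul (continuous_fst.norm))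
    have hAconv : Convex ℝ {p : E × ℝ | M + ⟪α₁, p.1⟫_ℝ + r * ‖p.1‖ < p.2} := by
      rintro ⟨x, s⟩ hx ⟨y, t⟩ hy a b ha hb' hab
      simp only [Set.mem_setOf_eq] at hx hy ⊢
      have hn : ‖a • x + b • y‖ ≤ a * ‖x‖ + b * ‖y‖ := by
        calc ‖a • x + b • y‖ ≤ ‖a • x‖ + ‖b • y‖ := norm_add_le _ _
          _ = a * ‖x‖ + b * ‖y‖ := by rw [norm_smul, norm_smul, Real.norm_of_nonneg ha,
              Real.norm_of_nonneg hb']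
      have hin : ⟪α₁, a • x + b • y⟫_ℝ = a * ⟪α₁, x⟫_ℝ + b * ⟪α₁, y⟫_ℝ := by
        rw [inner_add_right, real_inner_smul_right, real_inner_smul_right]
      have hrn := mul_le_mul_of_nonneg_left hn hr
      have hM : a * M + b * M = M := by rw [← add_mul, hab, one_mul]
      have hstrict : a * (M + ⟪α₁, x⟫_ℝ + r * ‖x‖) + b * (M + ⟪α₁, y⟫_ℝ + r * ‖y‖)
          < a * s + b * t := by
        rcases eq_or_lt_of_le ha with h0 | h0
        · have hb1 : b = 1 := by linarith
          simp only [← h0, hb1, zero_mul, one_mul, zero_add]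
          exact hy
        · have h1 : a * (M + ⟪α₁, x⟫_ℝ + r * ‖x‖) < a * s := (mul_lt_mul_iff_right₀ h0).mpr hx
          have h2 : b * (M + ⟪α₁, y⟫_ℝ + r * ‖y‖) ≤ b * t := mul_le_mul_of_nonneg_left hy.le hb'
          linarith
      simp only [Prod.fst_add, Prod.smul_fst, Prod.snd_add, Prod.smul_snd, smul_eq_mul]
      rw [hin]
      nlinarith [hrn, hM, hstrict]
    have hBconv : Convex ℝ {p : E × ℝ | p.1 ∈ Set.univ ∧ p.2 ≤ h p.1} := hconc.convex_hypograph
    have hdisj : Disjoint {p : E × ℝ | M + ⟪α₁, p.1⟫_ℝ + r * ‖p.1‖ < p.2}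
        {p : E × ℝ | p.1 ∈ Set.univ ∧ p.2 ≤ h p.1} := by
      rw [Set.disjoint_left]
      rintro ⟨x, s⟩ hx hxB
      simp only [Set.mem_setOf_eq] at hx hxB
      exact absurd (lt_of_le_of_lt (le_trans hxB.2 (hb x)) hx) (lt_irrefl _)
    obtain ⟨f, u, h1, h2⟩ := geometric_hahn_banach_open hAconv hAopen hBconv hdisj
    exact ⟨f, u, fun p hp => h1 p hp, fun p hp => h2 p ⟨Set.mem_univ _, hp⟩⟩
  obtain ⟨k, hk⟩ : ∃ k : ℝ, k = f (0, 1) := ⟨_, rfl⟩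
  have hsplit : ∀ (l : E) (t : ℝ), f (l, t) = f (l, 0) + t * k := by
    intro l t
    have heq : ((l, t) : E × ℝ) = (l, 0) + t • ((0 : E), (1 : ℝ)) := by
      simp only [Prod.smul_mk, smul_zero, smul_eq_mul, mul_one, Prod.mk_add_mk, add_zero,
        zero_add]
    rw [heq, map_add, map_smul, smul_eq_mul, hk]
  have hψ0 : ∀ s : ℝ, M < s → f ((0 : E), s) < u := by
    intro s hs
    apply hfA
    simpa using hs
  have hkneg : k < 0 := by
    have hB0 : u ≤ f ((0 : E), h 0) := hfB _ le_rfl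
    rw [hsplit] at hB0
    rcases lt_trichotomy k 0 with hk0 | hk0 | hk0
    · exact hk0
    · exfalso
      have h1 : f ((0 : E), M + 1) < u := hψ0 _ (by linarith)
      rw [hsplit, hk0, mul_zero] at h1
      rw [hk0, mul_zero] at hB0
      linarith
    · exfalso
      have h1 : f ((0 : E), max (M + 1) ((u + 1 - f ((0:E),(0:ℝ))) / k)) < u :=
        hψ0 _ (lt_of_lt_of_le (by linarith) (le_max_left _ _))
      rw [hsplit] at h1
      have h2 : (u + 1 - f ((0:E),(0:ℝ))) / k * k
          ≤ max (M + 1) ((u + 1 - f ((0:E),(0:ℝ))) / k) * k :=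
        mul_le_mul_of_nonneg_right (le_max_right _ _) hk0.le
      rw [div_mul_cancel₀ _ (ne_of_gt hk0)] at h2
      linarith
  obtain ⟨w, hwl⟩ : ∃ w : E, ∀ l, ⟪w, l⟫_ℝ = -(f (l, 0)) / k := by
    refine ⟨(toDual ℝ E).symm ((-k⁻¹) • (f.comp (ContinuousLinearMap.inl ℝ E ℝ))), fun l => ?_⟩
    rw [toDual_symm_apply]
    simp only [ContinuousLinearMap.coe_smul', Pi.smul_apply, ContinuousLinearMap.coe_comp',
      Function.comp_apply, ContinuousLinearMap.inl_apply, smul_eq_mul]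
    ring
  obtain ⟨c, hc⟩ : ∃ c : ℝ, c = u / k := ⟨_, rfl⟩
  have hlower : ∀ l, h l ≤ c + ⟪w, l⟫_ℝ := by
    intro l
    have h2 : u ≤ f (l, h l) := hfB _ le_rfl
    rw [hsplit] at h2
    rw [hwl, hc, ← add_div, le_div_iff_of_neg hkneg]
    linarith
  have hupper : ∀ l, c + ⟪w, l⟫_ℝ ≤ M + ⟪α₁, l⟫_ℝ + r * ‖l‖ := by
    intro l
    apply le_of_forall_pos_le_add
    intro δ hδ
    have h1 : f (l, (M + ⟪α₁, l⟫_ℝ + r * ‖l‖) + δ) < u := hfA _ (by simp [hδ])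
    rw [hsplit] at h1
    have h3 : c + ⟪w, l⟫_ℝ < M + ⟪α₁, l⟫_ℝ + r * ‖l‖ + δ := by
      rw [hwl, hc, ← add_div, div_lt_iff_of_neg hkneg]
      linarith
    linarith
  have hcM : c ≤ M := by
    have h0 := hupper 0
    simpa using h0
  refine ⟨w, ?_, fun l => le_trans (hlower l) (by linarith [hcM])⟩
  have hkey : ∀ t : ℝ, 0 < t → t * ‖w - α₁‖ ^ 2 ≤ (M - c) + t * (r * ‖w - α₁‖) := by
    intro t ht
    have h1 := hupper (t • (w - α₁))
    rw [real_inner_smul_right, real_inner_smul_right, norm_smul,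
      Real.norm_of_nonneg ht.le] at h1
    have hin : ⟪w, w - α₁⟫_ℝ - ⟪α₁, w - α₁⟫_ℝ = ‖w - α₁‖ ^ 2 := by
      rw [← inner_sub_left, real_inner_self_eq_norm_sq]
    nlinarith [h1, hin]
  have hsq : ‖w - α₁‖ ^ 2 ≤ r * ‖w - α₁‖ := by
    apply le_of_forall_pos_le_add
    intro ε hε
    have hMc : 0 ≤ M - c := by linarith
    have ht : (0:ℝ) < (M - c) / ε + 1 := by positivity
    have h1 := hkey _ ht
    have h2 : (M - c) ≤ ((M - c) / ε + 1) * ε := by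
      rw [add_mul, div_mul_cancel₀ _ (ne_of_gt hε)]
      linarith
    nlinarith [h1, h2, ht]
  rcases eq_or_lt_of_le (norm_nonneg (w - α₁)) with h0 | h0
  · rw [← h0]; exact hr
  · nlinarith [hsq, h0]

/-- Lemma `alphaexistence`: existence of a nearby control `α₂`
with controlled running cost. -/
theorem stmt4 {d : ℕ} (H : EuclideanSpace ℝ (Fin d) → EuclideanSpace ℝ (Fin d) → ℝ)
    (C₁ C₂ : ℝ)
    (hconc : ∀ x, ConcaveOn ℝ Set.univ (H x))
    (hLipLam : ∀ x l₁ l₂ : EuclideanSpace ℝ (Fin d), |H x l₁ - H x l₂| ≤ C₁ * ‖l₁ - l₂‖)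
    (hLipx : ∀ x₁ x₂ l : EuclideanSpace ℝ (Fin d),
      |H x₁ l - H x₂ l| ≤ C₂ * ‖x₁ - x₂‖ * (1 + ‖l‖))
    (L : EuclideanSpace ℝ (Fin d) → EuclideanSpace ℝ (Fin d) → EReal)
    (hL : ∀ x α, L x α = ⨆ l : EuclideanSpace ℝ (Fin d),
      ((-(inner ℝ α l : ℝ) + H x l : ℝ) : EReal)) :
    ∀ x₁ x₂ α₁ : EuclideanSpace ℝ (Fin d), ∀ β : ℝ, 0 < β →
      ∃ α₂ : EuclideanSpace ℝ (Fin d),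
        ‖α₂ - α₁‖ ≤ C₂ * ‖x₂ - x₁‖ + β ∧
        L x₂ α₂ ≤ L x₁ α₁ + ((C₂ * ‖x₂ - x₁‖ : ℝ) : EReal) := by
  intro x₁ x₂ α₁ β hβ
  by_cases hx : x₂ = x₁
  · subst hx
    refine ⟨α₁, ?_, ?_⟩
    · rw [sub_self, norm_zero, sub_self, norm_zero, mul_zero, zero_add]
      exact hβ.le
    · rw [sub_self, norm_zero, mul_zero]
      rw [show ((0 : ℝ) : EReal) = (0 : EReal) from rfl, add_zero]
  · have hpos : 0 < ‖x₁ - x₂‖ := by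
      rw [norm_sub_pos_iff]
      exact fun hcon => hx hcon.symm
    have hC₂ : 0 ≤ C₂ := by
      by_contra hneg
      push_neg at hneg
      have h1 := hLipx x₁ x₂ 0
      rw [norm_zero] at h1
      nlinarith [abs_nonneg (H x₁ 0 - H x₂ 0)]
    have hεnn : 0 ≤ C₂ * ‖x₂ - x₁‖ := mul_nonneg hC₂ (norm_nonneg _)
    by_cases htop : L x₁ α₁ = ⊤
    · refine ⟨α₁, ?_, ?_⟩
      · rw [sub_self, norm_zero]; linarith
      · rw [htop, EReal.top_add_coe]; exact le_top
    · have hbot : L x₁ α₁ ≠ ⊥ := by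
        intro hcon
        have h0 : ((-(inner ℝ α₁ (0 : EuclideanSpace ℝ (Fin d)) : ℝ)
            + H x₁ 0 : ℝ) : EReal) ≤ L x₁ α₁ := by
          rw [hL]
          exact le_iSup (fun l : EuclideanSpace ℝ (Fin d) =>
            ((-(inner ℝ α₁ l : ℝ) + H x₁ l : ℝ) : EReal)) 0
        rw [hcon, le_bot_iff] at h0
        exact EReal.coe_ne_bot _ h0
      have hm : (((L x₁ α₁).toReal : ℝ) : EReal) = L x₁ α₁ := EReal.coe_toReal htop hbot
      set m : ℝ := (L x₁ α₁).toReal with hmdef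
      clear_value m
      have hub : ∀ l, -(inner ℝ α₁ l : ℝ) + H x₁ l ≤ m := by
        intro l
        have h1 : ((-(inner ℝ α₁ l : ℝ) + H x₁ l : ℝ) : EReal) ≤ L x₁ α₁ := by
          rw [hL]
          exact le_iSup (fun l : EuclideanSpace ℝ (Fin d) =>
            ((-(inner ℝ α₁ l : ℝ) + H x₁ l : ℝ) : EReal)) l
        rw [← hm] at h1
        exact EReal.coe_le_coe_iff.mp h1
      have hbound : ∀ l, H x₂ l ≤ (m + C₂ * ‖x₂ - x₁‖) + (inner ℝ α₁ l : ℝ)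
          + (C₂ * ‖x₂ - x₁‖ + β) * ‖l‖ := by
        intro l
        have h1 := hLipx x₁ x₂ l
        rw [norm_sub_rev x₁ x₂] at h1
        have h2 := (abs_le.mp h1).1
        have h3 := hub l
        nlinarith [norm_nonneg l, mul_nonneg hβ.le (norm_nonneg l)]
      obtain ⟨α₂, hα₂, hα₂b⟩ := sandwich_aux (H x₂) (hconc x₂) α₁
        (m + C₂ * ‖x₂ - x₁‖) (C₂ * ‖x₂ - x₁‖ + β) (by linarith) hbound
      refine ⟨α₂, hα₂, ?_⟩
      rw [hL]
      have hle : (⨆ l : EuclideanSpace ℝ (Fin d),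
          ((-(inner ℝ α₂ l : ℝ) + H x₂ l : ℝ) : EReal))
          ≤ ((m + C₂ * ‖x₂ - x₁‖ : ℝ) : EReal) := by
        apply iSup_le
        intro l
        apply EReal.coe_le_coe_iff.mpr
        have := hα₂b l
        linarith
      refine le_trans hle ?_
      rw [← hm, ← EReal.coe_add]
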